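/- Let F_N be the N×N Fourier matrix, (F_N)_{ij} = w^{ij} with w = e^{2πi/N} and indices in ℤ/Nℤ, and let r ≥ 1. Then the truncation matrix X = X^{(r)} of F_N satisfies X² = N·X; consequently X/N is an orthogonal projection (self-adjoint idempotent) in M_{N^r}(ℂ). -/

import Mathlib

open Matrix BigOperators ComplexConjugate

/-- The Fourier matrix `F_N = (w^{ij})`, `w = e^{2πi/N}`, indices in `ℤ/Nℤ`. -/
noncomputable def fourierMat (N : ℕ) : Matrix (ZMod N) (ZMod N) ℂ :=
  fun i j => Complex.exp (2 * Real.pi * Complex.I * (i.val * j.val) / N)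

/-- The profile matrix of `H`: `Q_{ab,cd} = (1/N)·∑_i H_{ia}·H_{id}·conj(H_{ib}·H_{ic})`. -/
noncomputable def profile {I : Type*} [Fintype I] (H : Matrix I I ℂ) (a b c d : I) : ℂ :=
  (Fintype.card I : ℂ)⁻¹ * ∑ i, H i a * H i d * conj (H i b * H i c)

/-- The truncation matrix of order `r`:
`X_{a₁…a_r,b₁…b_r} = Q_{a₁b₁,a₂b₂}⋯Q_{a_rb_r,a₁b₁}` (cyclic indices, via `finRotate`). -/
noncomputable def trunc {I : Type*} [Fintype I] (H : Matrix I I ℂ) (r : ℕ) :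
    Matrix (Fin r → I) (Fin r → I) ℂ :=
  fun a b => ∏ s : Fin r,
    profile H (a s) (b s) (a (finRotate r s)) (b (finRotate r s))

section Char
variable (N : ℕ) [NeZero N]

noncomputable def zetaN : ℂ := Complex.exp (2 * Real.pi * Complex.I / N)

lemma zetaN_prim : IsPrimitiveRoot (zetaN N) N :=
  Complex.isPrimitiveRoot_exp N (NeZero.ne N)

lemma zetaN_pow_N : zetaN N ^ N = 1 := (zetaN_prim N).pow_eq_one

noncomputable def ee (x : ZMod N) : ℂ := zetaN N ^ x.val

variable {N}

lemma ee_zero : ee N 0 = 1 := by simp [ee]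

lemma ee_natpow (m : ℕ) : zetaN N ^ m = ee N (m : ZMod N) := by
  rw [ee, ZMod.val_natCast, ← pow_eq_pow_mod m (zetaN_pow_N N)]

lemma ee_add (x y : ZMod N) : ee N (x + y) = ee N x * ee N y := by
  rw [ee, ZMod.val_add, ← pow_eq_pow_mod _ (zetaN_pow_N N), pow_add]; rfl

lemma ee_mul_ee_neg (x : ZMod N) : ee N x * ee N (-x) = 1 := by
  rw [← ee_add, add_neg_cancel, ee_zero]

lemma conj_ee (x : ZMod N) : conj (ee N x) = ee N (-x) := by
  have habs : ‖ee N x‖ = 1 := by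
    rw [ee, norm_pow, zetaN, Complex.norm_exp]
    have : (2 * Real.pi * Complex.I / N).re = 0 := by
      simp [Complex.div_re]
    rw [this, Real.exp_zero, one_pow]
  have h1 : conj (ee N x) * ee N x = 1 := by
    rw [mul_comm, Complex.mul_conj, ← Complex.sq_norm, habs]; norm_num
  have h2 := ee_mul_ee_neg x
  have hne : ee N x ≠ 0 := fun h => by simp [h] at h2
  apply mul_right_cancel₀ hne
  rw [mul_comm (ee N (-x)), h2, ← h1, mul_comm]

lemma ee_ne_zero (x : ZMod N) : ee N x ≠ 0 :=
  fun h => by have := ee_mul_ee_neg x; rw [h, zero_mul] at this; exact one_ne_zero this.symm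

lemma ee_eq_one_iff (x : ZMod N) : ee N x = 1 ↔ x = 0 := by
  constructor
  · intro h
    rw [ee, (zetaN_prim N).pow_eq_one_iff_dvd] at h
    rcases Nat.eq_zero_or_pos x.val with hv | hv
    · exact (ZMod.val_eq_zero x).mp hv
    · exact absurd (Nat.le_of_dvd hv h) (not_le.mpr (ZMod.val_lt x))
  · intro h; rw [h, ee_zero]

lemma sum_ee (k : ZMod N) : ∑ i : ZMod N, ee N (i * k) = if k = 0 then (N : ℂ) else 0 := by
  have hterm : ∀ i : ZMod N, ee N (i * k) = (ee N k) ^ i.val := by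
    intro i
    rw [ee, ee, ← pow_mul, ZMod.val_mul, ← pow_eq_pow_mod _ (zetaN_pow_N N), mul_comm i.val]
  simp_rw [hterm]
  have hbij : ∑ i : ZMod N, (ee N k) ^ i.val = ∑ j ∈ Finset.range N, (ee N k) ^ j := by
    refine Finset.sum_nbij' (fun i => i.val) (fun j => (j : ZMod N)) ?_ ?_ ?_ ?_ ?_
    · intro i _; exact Finset.mem_range.mpr (ZMod.val_lt i)
    · intro j _; exact Finset.mem_univ _
    · intro i _; exact ZMod.natCast_rightInverse i
    · intro j hj; exact ZMod.val_natCast_of_lt (Finset.mem_range.mp hj)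
    · intro i _; rfl
  rw [hbij]
  by_cases hk : k = 0
  · simp [hk, ee_zero]
  · rw [if_neg hk]
    have hne1 : ee N k ≠ 1 := fun h => hk ((ee_eq_one_iff k).mp h)
    rw [geom_sum_eq hne1]
    have : (ee N k) ^ N = 1 := by
      rw [ee, ← pow_mul, mul_comm, pow_mul, zetaN_pow_N, one_pow]
    rw [this, sub_self, zero_div]

lemma fourierMat_apply' (i j : ZMod N) :
    (fun i j : ZMod N => Complex.exp (2 * Real.pi * Complex.I * (i.val * j.val) / N)) i j
      = ee N (i * j) := by
  have h1 : (2 : ℂ) * Real.pi * Complex.I * (i.val * j.val) / N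
      = (i.val * j.val : ℕ) * (2 * Real.pi * Complex.I / N) := by push_cast; ring
  show Complex.exp _ = _
  rw [h1, Complex.exp_nat_mul, ← zetaN, ee_natpow, Nat.cast_mul, ZMod.natCast_val,
    ZMod.natCast_val, ZMod.cast_id, ZMod.cast_id]
end Char

section Main
variable {N : ℕ} [NeZero N]

lemma fourierMat_ee (i j : ZMod N) : fourierMat N i j = ee N (i * j) :=
  fourierMat_apply' i j

lemma profile_fourier (a b c d : ZMod N) :
    profile (fourierMat N) a b c d = if a - b = c - d then 1 else 0 := by
  have hsummand : ∀ i : ZMod N,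
      fourierMat N i a * fourierMat N i d * conj (fourierMat N i b * fourierMat N i c)
        = ee N (i * (a + d - b - c)) := by
    intro i
    rw [fourierMat_ee, fourierMat_ee, fourierMat_ee, fourierMat_ee, _root_.map_mul, conj_ee, conj_ee,
      ← ee_add, ← ee_add, ← ee_add]
    congr 1
    ring
  rw [profile]
  simp_rw [hsummand]
  rw [sum_ee, ZMod.card]
  have hiff : a + d - b - c = 0 ↔ a - b = c - d := by
    constructor <;> intro h <;> linear_combination h
  by_cases h : a - b = c - d
  · rw [if_pos (hiff.mpr h), if_pos h,
      inv_mul_cancel₀ (Nat.cast_ne_zero.mpr (NeZero.ne N))]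
  · rw [if_neg (fun hh => h (hiff.mp hh)), if_neg h, mul_zero]

lemma trunc_fourier_eq (r : ℕ) (a b : Fin r → ZMod N) :
    trunc (fourierMat N) r a b =
      if (∀ s, a s - b s = a (finRotate r s) - b (finRotate r s)) then 1 else 0 := by
  rw [trunc]
  simp_rw [profile_fourier]
  by_cases h : ∀ s, a s - b s = a (finRotate r s) - b (finRotate r s)
  · rw [if_pos h]
    exact Finset.prod_eq_one (fun s _ => if_pos (h s))
  · rw [if_neg h]
    push_neg at h
    obtain ⟨s, hs⟩ := h
    exact Finset.prod_eq_zero (Finset.mem_univ s) (if_neg hs)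

open Fin.NatCast in
lemma const_of_rot {α : Type*} {r : ℕ} (d : Fin (r + 1) → α)
    (h : ∀ s, d s = d (finRotate (r + 1) s)) : ∀ s t, d s = d t := by
  have key : ∀ (k : ℕ) (s : Fin (r + 1)), d s = d (s + (k : Fin (r + 1))) := by
    intro k
    induction k with
    | zero => intro s; simp
    | succ n ih =>
      intro s
      rw [ih s]
      have h2 := h (s + (n : Fin (r + 1)))
      rw [finRotate_succ_apply] at h2
      rw [h2]
      congr 1
      push_cast
      exact add_assoc _ _ _
  intro s t
  have := key (t - s).val s
  rwa [Fin.cast_val_eq_self, add_comm, sub_add_cancel] at this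

lemma trunc_fourier_eq' {m : ℕ} (u v : Fin (m + 1) → ZMod N) :
    trunc (fourierMat N) (m + 1) u v =
      if (∀ s t, u s - v s = u t - v t) then 1 else 0 := by
  rw [trunc_fourier_eq]
  by_cases h : ∀ s t, u s - v s = u t - v t
  · rw [if_pos (fun s => h s _), if_pos h]
  · rw [if_neg, if_neg h]
    intro hrot
    exact h (const_of_rot (fun s => u s - v s) hrot)

lemma trunc_sq {m : ℕ} :
    trunc (fourierMat N) (m + 1) * trunc (fourierMat N) (m + 1)
      = (N : ℂ) • trunc (fourierMat N) (m + 1) := by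
  classical
  ext a b
  rw [Matrix.mul_apply, Matrix.smul_apply]
  simp_rw [trunc_fourier_eq']
  by_cases hP : ∀ s t, a s - b s = a t - b t
  · rw [if_pos hP, smul_eq_mul, mul_one]
    have hterm : ∀ c : Fin (m + 1) → ZMod N,
        (if (∀ s t, a s - c s = a t - c t) then (1 : ℂ) else 0) *
          (if (∀ s t, c s - b s = c t - b t) then (1 : ℂ) else 0)
        = if ((∀ s t, a s - c s = a t - c t) ∧ (∀ s t, c s - b s = c t - b t))
            then 1 else 0 := by
      intro c
      by_cases h1 : ∀ s t, a s - c s = a t - c t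
      · by_cases h2 : ∀ s t, c s - b s = c t - b t
        · rw [if_pos h1, if_pos h2, if_pos ⟨h1, h2⟩, mul_one]
        · rw [if_pos h1, if_neg h2, mul_zero, if_neg (fun hh => h2 hh.2)]
      · rw [if_neg h1, zero_mul, if_neg (fun hh => h1 hh.1)]
    simp_rw [hterm]
    rw [Finset.sum_boole]
    have himg : Finset.univ.filter (fun c : Fin (m + 1) → ZMod N =>
          (∀ s t, a s - c s = a t - c t) ∧ (∀ s t, c s - b s = c t - b t))
        = Finset.image (fun t : ZMod N => fun s => a s - t) Finset.univ := by
      ext c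
      simp only [Finset.mem_filter, Finset.mem_univ, true_and, Finset.mem_image]
      constructor
      · rintro ⟨h1, _⟩
        refine ⟨a 0 - c 0, funext fun s => ?_⟩
        linear_combination h1 s 0
      · rintro ⟨t, rfl⟩
        refine ⟨fun s u => by ring, fun s u => ?_⟩
        linear_combination hP s u
    rw [himg, Finset.card_image_of_injective, Finset.card_univ, ZMod.card]
    intro t t' h
    have h0 := congrFun h 0
    simp only [] at h0
    linear_combination -h0
  · rw [if_neg hP, smul_eq_mul, mul_zero]
    apply Finset.sum_eq_zero
    intro c _
    by_cases h1 : ∀ s t, a s - c s = a t - c t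
    · have h2 : ¬ ∀ s t, c s - b s = c t - b t :=
        fun h2 => hP fun s t => by linear_combination h1 s t + h2 s t
      rw [if_neg h2, mul_zero]
    · rw [if_neg h1, zero_mul]

lemma trunc_herm {m : ℕ} :
    (trunc (fourierMat N) (m + 1))ᴴ = trunc (fourierMat N) (m + 1) := by
  ext a b
  rw [Matrix.conjTranspose_apply, trunc_fourier_eq', trunc_fourier_eq']
  have hiff : (∀ s t, b s - a s = b t - a t) ↔ (∀ s t, a s - b s = a t - b t) := by
    constructor <;> intro h s t <;> linear_combination -h s t
  by_cases h : ∀ s t, a s - b s = a t - b t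
  · rw [if_pos (hiff.mpr h), if_pos h]; exact star_one ℂ
  · rw [if_neg (fun hh => h (hiff.mp hh)), if_neg h]; exact star_zero ℂ
end Main

/-- for the Fourier matrix `F_N`, the truncation matrix `X = X^{(r)}`
satisfies `X² = N·X`; consequently `X/N` is an orthogonal projection
(a self-adjoint idempotent) in `M_{N^r}(ℂ)`. -/
theorem trunc_fourier_proj (N : ℕ) [NeZero N] (r : ℕ) (hr : 1 ≤ r) :
    trunc (fourierMat N) r * trunc (fourierMat N) r = (N : ℂ) • trunc (fourierMat N) r ∧
    ((N : ℂ)⁻¹ • trunc (fourierMat N) r)ᴴ = (N : ℂ)⁻¹ • trunc (fourierMat N) r ∧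
    ((N : ℂ)⁻¹ • trunc (fourierMat N) r) * ((N : ℂ)⁻¹ • trunc (fourierMat N) r) =
      (N : ℂ)⁻¹ • trunc (fourierMat N) r := by
  obtain ⟨m, rfl⟩ : ∃ m, r = m + 1 := ⟨r - 1, (Nat.succ_pred_eq_of_pos hr).symm⟩
  have hNC : (N : ℂ) ≠ 0 := Nat.cast_ne_zero.mpr (NeZero.ne N)
  refine ⟨trunc_sq, ?_, ?_⟩
  · rw [Matrix.conjTranspose_smul, trunc_herm, star_inv₀, star_natCast]
  · rw [Matrix.smul_mul, Matrix.mul_smul, trunc_sq, smul_smul, smul_smul]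
    congr 1
    field_simp
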